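/- Let n, m ∈ ℕ and let f : [0,1] → ℝ be convex and continuous. Then B_{mn}(f)((x₁+⋯+x_m)/m) ≥ ∑_{i₁=0}^n ⋯ ∑_{i_m=0}^n (∏_{ν=1}^m b_{n,i_ν}(x_ν)) · f((i₁+⋯+i_m)/(mn)) for all x₁,…,x_m ∈ [0,1]. -/

import Mathlib

/-- Bernstein basis polynomial `b_{n,k}(x) = C(n,k) x^k (1-x)^(n-k)`. -/
def bern (n k : ℕ) (x : ℝ) : ℝ := (n.choose k : ℝ) * x ^ k * (1 - x) ^ (n - k)

/-- Classical Bernstein operator of degree `N`. -/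
noncomputable def bernOp (N : ℕ) (f : ℝ → ℝ) (x : ℝ) : ℝ :=
  ∑ k ∈ Finset.range (N+1), bern N k x * f ((k : ℝ) / N)

/-- Generalized Bernstein-type functional: each element of `L` is the parameter of an
independent Bernoulli slot; `G1 L g` is the expectation of `g` of the total count. -/
noncomputable def G1 : List ℝ → (ℕ → ℝ) → ℝ
  | [], g => g 0
  | x :: L, g => (1 - x) * G1 L g + x * G1 L (fun k => g (k+1))

lemma G1_nonneg (L : List ℝ) (h : ℕ → ℝ) (hL : ∀ z ∈ L, 0 ≤ z ∧ z ≤ 1)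
    (hh : ∀ k, k ≤ L.length → 0 ≤ h k) : 0 ≤ G1 L h := by
  induction L generalizing h with
  | nil => simpa [G1] using hh 0 (by simp)
  | cons x L ih =>
    obtain ⟨hx0, hx1⟩ := hL x (by simp)
    have h1 : 0 ≤ G1 L h :=
      ih h (fun z hz => hL z (by simp [hz])) (fun k hk => hh k (by simp; omega))
    have h2 : 0 ≤ G1 L (fun k => h (k+1)) :=
      ih _ (fun z hz => hL z (by simp [hz])) (fun k hk => hh (k+1) (by simp; omega))
    simp only [G1]
    have : 0 ≤ (1 - x) * G1 L h := mul_nonneg (by linarith) h1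
    nlinarith

lemma G1_second (L : List ℝ) : ∀ g : ℕ → ℝ,
    G1 L (fun k => g (k+2) - 2*g (k+1) + g k)
      = G1 L (fun k => g (k+2)) - 2 * G1 L (fun k => g (k+1)) + G1 L g := by
  induction L with
  | nil => intro g; simp [G1]
  | cons x L ih =>
    intro g
    simp only [G1]
    have e1 : (fun k => g (k+1+2) - 2*g (k+1+1) + g (k+1))
        = (fun k => (fun j => g (j+1)) (k+2) - 2*(fun j => g (j+1)) (k+1) + (fun j => g (j+1)) k) := by
      funext k; simp only []
    rw [ih g, e1, ih (fun j => g (j+1))]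
    have e2 : (fun k => g (k+2+1)) = (fun k => g (k+1+2)) := by funext k; congr 1
    have e3 : (fun k => g (k+1+1)) = (fun k => g (k+2)) := by funext k; congr 1
    rw [e2, e3]
    ring

lemma G1_expand2 (x y : ℝ) (L : List ℝ) (g : ℕ → ℝ) :
    G1 (x::y::L) g = G1 L g + (x+y)*(G1 L (fun k => g (k+1)) - G1 L g)
      + x*y*(G1 L (fun k => g (k+2)) - 2*G1 L (fun k => g (k+1)) + G1 L g) := by
  simp only [G1]
  have e3 : (fun k => g (k+1+1)) = (fun k => g (k+2)) := by funext k; congr 1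
  rw [e3]
  ring

lemma G1_perm {L L' : List ℝ} (h : L.Perm L') : ∀ g : ℕ → ℝ, G1 L g = G1 L' g := by
  induction h with
  | nil => intro g; rfl
  | cons x _ ih => intro g; simp only [G1]; rw [ih, ih]
  | swap x y L => intro g; simp only [G1]; ring
  | trans _ _ ih1 ih2 => intro g; rw [ih1 g, ih2 g]

lemma G1_append : ∀ (L₁ L₂ : List ℝ) (g : ℕ → ℝ),
    G1 (L₁ ++ L₂) g = G1 L₁ (fun a => G1 L₂ (fun c => g (a + c))) := by
  intro L₁
  induction L₁ with
  | nil =>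
    intro L₂ g
    simp only [List.nil_append, G1]
    congr 1; funext c; congr 1; omega
  | cons x L ih =>
    intro L₂ g
    simp only [List.cons_append, G1, List.append_eq]
    rw [ih, ih]
    have e : (fun k => G1 L₂ fun c => (fun j => g (j + 1)) (k + c)) = (fun k => (fun a => G1 L₂ fun c => g (a + c)) (k + 1)) := by
      funext k; simp only []; congr 1; funext c; congr 1; omega
    rw [e]

lemma pairmove (L : List ℝ) (g : ℕ → ℝ) (x y u v : ℝ) (hsum : x + y = u + v)
    (hprod : x*y ≤ u*v) (hL : ∀ z ∈ L, 0 ≤ z ∧ z ≤ 1)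
    (hg : ∀ k, k + 2 ≤ L.length + 2 → 0 ≤ g k - 2*g (k+1) + g (k+2)) :
    G1 (x::y::L) g ≤ G1 (u::v::L) g := by
  have hD : 0 ≤ G1 L (fun k => g (k+2) - 2*g (k+1) + g k) := by
    apply G1_nonneg _ _ hL
    intro k hk
    have := hg k (by omega)
    linarith
  rw [G1_second] at hD
  rw [G1_expand2, G1_expand2, hsum]
  nlinarith

def bsum (n : ℕ) (x : ℝ) (g : ℕ → ℝ) : ℝ := ∑ k ∈ Finset.range (n+1), bern n k x * g k

lemma bern_succ (n k : ℕ) (x : ℝ) (hk : k ≤ n) :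
    bern (n+1) (k+1) x = (1-x) * bern n (k+1) x + x * bern n k x := by
  rcases eq_or_lt_of_le hk with h | h
  · subst h
    simp [bern, Nat.choose_succ_self, Nat.choose_self]
    ring
  · unfold bern
    rw [Nat.choose_succ_succ]
    have e1 : n + 1 - (k+1) = n - k := by omega
    have e2 : n - k = (n - (k+1)) + 1 := by omega
    rw [e1, e2]
    push_cast
    ring

lemma bsum_succ (n : ℕ) (x : ℝ) (g : ℕ → ℝ) :
    bsum (n+1) x g = (1-x)*bsum n x g + x * bsum n x (fun k => g (k+1)) := by
  unfold bsum
  rw [Finset.sum_range_succ' (fun k => bern (n+1) k x * g k)]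
  have step : ∑ k ∈ Finset.range (n+1), bern (n+1) (k+1) x * g (k+1)
      = ∑ k ∈ Finset.range (n+1), ((1-x) * bern n (k+1) x * g (k+1) + x * bern n k x * g (k+1)) := by
    apply Finset.sum_congr rfl
    intro k hk
    rw [bern_succ n k x (by simpa using Nat.lt_succ_iff.mp (Finset.mem_range.mp hk))]
    ring
  rw [step, Finset.sum_add_distrib]
  have h1 : ∑ k ∈ Finset.range (n+1), (1-x) * bern n (k+1) x * g (k+1)
      = (1-x) * ∑ k ∈ Finset.range (n+1), bern n (k+1) x * g (k+1) := by
    rw [Finset.mul_sum]; apply Finset.sum_congr rfl; intros; ring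
  have h2 : ∑ k ∈ Finset.range (n+1), x * bern n k x * g (k+1)
      = x * ∑ k ∈ Finset.range (n+1), bern n k x * g (k+1) := by
    rw [Finset.mul_sum]; apply Finset.sum_congr rfl; intros; ring
  have h3 : ∑ k ∈ Finset.range (n+1), bern n (k+1) x * g (k+1)
      = ∑ k ∈ Finset.range n, bern n (k+1) x * g (k+1) := by
    rw [Finset.sum_range_succ]
    have : bern n (n+1) x = 0 := by
      simp [bern, Nat.choose_succ_self]
    rw [this]; simp
  have h4 : ∑ k ∈ Finset.range (n+1), bern n k x * g k
      = ∑ k ∈ Finset.range n, bern n (k+1) x * g (k+1) + bern n 0 x * g 0 := by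
    rw [Finset.sum_range_succ' (fun k => bern n k x * g k)]
  have h5 : bern (n+1) 0 x * g 0 = (1-x) * (bern n 0 x * g 0) := by
    simp [bern]; ring
  rw [h1, h2, h3, h4, h5]
  ring

lemma bsum_eq_G1 : ∀ (n : ℕ) (x : ℝ) (g : ℕ → ℝ), bsum n x g = G1 (List.replicate n x) g := by
  intro n
  induction n with
  | zero => intro x g; simp [bsum, bern, G1]
  | succ n ih =>
    intro x g
    rw [bsum_succ, ih, ih, List.replicate_succ]
    simp only [G1]

lemma list_le_sum (L : List ℝ) (c : ℝ) (h : ∀ z ∈ L, c ≤ z) : (L.length : ℝ) * c ≤ L.sum := by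
  induction L with
  | nil => simp
  | cons x L ih =>
    have hx := h x (by simp)
    have := ih (fun z hz => h z (by simp [hz]))
    simp only [List.length_cons, List.sum_cons]
    push_cast
    linarith

lemma list_sum_le (L : List ℝ) (c : ℝ) (h : ∀ z ∈ L, z ≤ c) : L.sum ≤ (L.length : ℝ) * c := by
  induction L with
  | nil => simp
  | cons x L ih =>
    have hx := h x (by simp)
    have := ih (fun z hz => h z (by simp [hz]))
    simp only [List.length_cons, List.sum_cons]
    push_cast
    linarith

lemma exists_two (L : List ℝ) (c : ℝ) (hsum : L.sum = (L.length : ℝ) * c)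
    (e : ℝ) (heL : e ∈ L) (hec : e ≠ c) : (∃ a ∈ L, a < c) ∧ (∃ b ∈ L, c < b) := by
  have hlen1 : 1 ≤ L.length := List.length_pos_iff.mpr (by rintro rfl; simp at heL)
  have hperm := List.perm_cons_erase heL
  have hsume : L.sum = e + (L.erase e).sum := by
    rw [hperm.sum_eq, List.sum_cons]
  have hlene : ((L.erase e).length : ℝ) = (L.length : ℝ) - 1 := by
    rw [List.length_erase_of_mem heL]
    push_cast [Nat.cast_sub hlen1]
    ring
  constructor
  · by_contra hcon
    push_neg at hcon
    have he : c < e := lt_of_le_of_ne (hcon e heL) (Ne.symm hec)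
    have h2 : ((L.erase e).length : ℝ) * c ≤ (L.erase e).sum :=
      list_le_sum _ _ (fun z hz => hcon z (List.mem_of_mem_erase hz))
    rw [hlene] at h2
    linarith [hsum, hsume]
  · by_contra hcon
    push_neg at hcon
    have he : e < c := lt_of_le_of_ne (hcon e heL) hec
    have h2 : (L.erase e).sum ≤ ((L.erase e).length : ℝ) * c :=
      list_sum_le _ _ (fun z hz => hcon z (List.mem_of_mem_erase hz))
    rw [hlene] at h2
    linarith [hsum, hsume]

lemma robinhood : ∀ (len : ℕ) (L : List ℝ) (g : ℕ → ℝ) (c : ℝ), L.length = len →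
    (∀ z ∈ L, 0 ≤ z ∧ z ≤ 1) → 0 ≤ c → c ≤ 1 → L.sum = (len : ℝ) * c →
    (∀ k, k + 2 ≤ len → 0 ≤ g k - 2*g (k+1) + g (k+2)) →
    G1 L g ≤ G1 (List.replicate len c) g := by
  intro len
  induction len with
  | zero =>
    intro L g c hlen _ _ _ _ _
    have : L = [] := List.eq_nil_of_length_eq_zero hlen
    subst this
    simp [List.replicate]
  | succ m ih =>
    intro L g c hlen hmem hc0 hc1 hsum hcvx
    by_cases hall : ∀ z ∈ L, z = c
    · have : L = List.replicate L.length c := List.eq_replicate_of_mem hall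
      rw [hlen] at this
      rw [this]
    · push_neg at hall
      obtain ⟨e, heL, hec⟩ := hall
      obtain ⟨⟨a, haL, halt⟩, ⟨b, hbL, hbgt⟩⟩ := exists_two L c (by rw [hlen]; exact hsum) e heL hec
      have hab : a ≠ b := ne_of_lt (lt_trans halt hbgt)
      set L₁ := L.erase a with hL₁
      have hperm1 : L.Perm (a :: L₁) := List.perm_cons_erase haL
      have hbL₁ : b ∈ L₁ := (List.mem_erase_of_ne (Ne.symm hab)).mpr hbL
      set L₂ := L₁.erase b with hL₂
      have hperm2 : L₁.Perm (b :: L₂) := List.perm_cons_erase hbL₁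
      have hperm : L.Perm (a :: b :: L₂) := hperm1.trans (hperm2.cons a)
      have hsubL₂ : ∀ z ∈ L₂, z ∈ L := fun z hz =>
        List.mem_of_mem_erase (List.mem_of_mem_erase hz)
      have hmem₂ : ∀ z ∈ L₂, 0 ≤ z ∧ z ≤ 1 := fun z hz => hmem z (hsubL₂ z hz)
      have ha01 := hmem a haL
      have hb01 := hmem b hbL
      have hlen₂ : L₂.length + 2 = m + 1 := by
        have := hperm.length_eq
        simp only [List.length_cons] at this
        omega
      -- pair move
      have hmove : G1 (a :: b :: L₂) g ≤ G1 (c :: (a + b - c) :: L₂) g := by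
        apply pairmove L₂ g a b c (a + b - c) (by ring)
        · nlinarith
        · exact hmem₂
        · intro k hk; exact hcvx k (by omega)
      -- recurse
      set M := (a + b - c) :: L₂ with hM
      have hlenM : M.length = m := by simp only [hM, List.length_cons]; omega
      have hmemM : ∀ z ∈ M, 0 ≤ z ∧ z ≤ 1 := by
        intro z hz
        rcases List.mem_cons.mp hz with rfl | hz'
        · constructor <;> nlinarith
        · exact hmem₂ z hz'
      have hsumM : M.sum = (m : ℝ) * c := by
        have h1 : L.sum = a + (b + L₂.sum) := by
          rw [hperm.sum_eq]; simp
        simp only [hM, List.sum_cons]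
        push_cast at hsum ⊢
        linarith
      have hrec1 : G1 M g ≤ G1 (List.replicate m c) g :=
        ih M g c hlenM hmemM hc0 hc1 hsumM (fun k hk => hcvx k (by omega))
      have hrec2 : G1 M (fun k => g (k+1)) ≤ G1 (List.replicate m c) (fun k => g (k+1)) := by
        apply ih M _ c hlenM hmemM hc0 hc1 hsumM
        intro k hk
        have := hcvx (k+1) (by omega)
        have e1 : k + 1 + 1 = k + 2 := by omega
        have e2 : k + 1 + 2 = k + 3 := by omega
        have e3 : k + 2 + 1 = k + 3 := by omega
        show 0 ≤ g (k+1) - 2 * g (k + 1 + 1) + g (k + 1 + 2)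
        rw [e1, e2]
        rw [e3] at this
        linarith
      calc G1 L g = G1 (a :: b :: L₂) g := G1_perm hperm g
        _ ≤ G1 (c :: M) g := hmove
        _ = (1 - c) * G1 M g + c * G1 M (fun k => g (k+1)) := by simp only [G1]
        _ ≤ (1 - c) * G1 (List.replicate m c) g + c * G1 (List.replicate m c) (fun k => g (k+1)) := by
            apply add_le_add
            · exact mul_le_mul_of_nonneg_left hrec1 (by linarith)
            · exact mul_le_mul_of_nonneg_left hrec2 hc0
        _ = G1 (List.replicate (m+1) c) g := by rw [List.replicate_succ]; simp only [G1]

lemma multi (n : ℕ) : ∀ (m : ℕ) (x : Fin m → ℝ) (g : ℕ → ℝ),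
    ∑ i : Fin m → Fin (n+1), (∏ ν, bern n (i ν) (x ν)) * g (∑ ν, (i ν : ℕ))
      = G1 ((List.ofFn fun ν => List.replicate n (x ν)).flatten) g := by
  intro m
  induction m with
  | zero =>
    intro x g
    simp [G1]
  | succ m ih =>
    intro x g
    rw [← Equiv.sum_comp (Fin.consEquiv (fun _ : Fin (m+1) => Fin (n+1)))
        (fun i => (∏ ν, bern n (i ν) (x ν)) * g (∑ ν, (i ν : ℕ))), Fintype.sum_prod_type]
    simp only [Fin.consEquiv_apply]
    have key : ∀ a : Fin (n+1), (∑ i : Fin m → Fin (n+1),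
        (∏ ν : Fin (m+1), bern n (Fin.cons (α := fun _ => Fin (n+1)) a i ν) (x ν))
          * g (∑ ν : Fin (m+1), (Fin.cons (α := fun _ => Fin (n+1)) a i ν : ℕ)))
          = bern n ↑a (x 0) * G1 ((List.ofFn fun ν : Fin m => List.replicate n (x ν.succ)).flatten)
              (fun c => g (↑a + c)) := by
      intro a
      rw [← ih (fun ν => x ν.succ) (fun c => g (↑a + c)), Finset.mul_sum]
      apply Finset.sum_congr rfl
      intro i _
      simp only [Fin.prod_univ_succ, Fin.sum_univ_succ, Fin.cons_zero, Fin.cons_succ]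
      ring
    rw [Finset.sum_congr rfl (fun a _ => key a)]
    rw [Fin.sum_univ_eq_sum_range (fun a : ℕ =>
      bern n a (x 0) * G1 ((List.ofFn fun ν : Fin m => List.replicate n (x ν.succ)).flatten)
        (fun c => g (a + c))) (n+1)]
    have h2 : (∑ k ∈ Finset.range (n+1), bern n k (x 0) *
        G1 ((List.ofFn fun ν : Fin m => List.replicate n (x ν.succ)).flatten) (fun c => g (k + c)))
        = bsum n (x 0) (fun a => G1 ((List.ofFn fun ν : Fin m => List.replicate n (x ν.succ)).flatten)
            (fun c => g (a + c))) := rfl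
    rw [h2, bsum_eq_G1, ← G1_append]
    congr 1
    rw [List.ofFn_succ, List.flatten_cons]

theorem stmt2 (n m : ℕ) (f : ℝ → ℝ) (hf : ConvexOn ℝ (Set.Icc 0 1) f)
    (hfc : ContinuousOn f (Set.Icc 0 1)) (x : Fin m → ℝ) (hx : ∀ ν, x ν ∈ Set.Icc (0:ℝ) 1) :
    ∑ i : Fin m → Fin (n+1),
      (∏ ν : Fin m, bern n (i ν) (x ν)) * f (((∑ ν : Fin m, (i ν : ℕ) : ℕ) : ℝ) / (m * n))
      ≤ bernOp (m * n) f ((∑ ν : Fin m, x ν) / m) := by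
  set c : ℝ := (∑ ν : Fin m, x ν) / m with hc
  set g : ℕ → ℝ := fun k => f ((k : ℝ) / ((m : ℝ) * (n : ℝ))) with hg
  set LM : List ℝ := (List.ofFn fun ν : Fin m => List.replicate n (x ν)).flatten with hLM
  have hlenLM : LM.length = m * n := by
    simp [hLM, List.length_flatten, List.map_ofFn, Function.comp_def, List.sum_ofFn, mul_comm]
  have hmemLM : ∀ z ∈ LM, 0 ≤ z ∧ z ≤ 1 := by
    intro z hz
    rw [hLM, List.mem_flatten] at hz
    obtain ⟨l, hl, hzl⟩ := hz
    rw [List.mem_ofFn] at hl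
    obtain ⟨ν, rfl⟩ := hl
    have := List.eq_of_mem_replicate hzl
    subst this
    exact ⟨(hx ν).1, (hx ν).2⟩
  have hsum0 : LM.sum = (n : ℝ) * ∑ ν, x ν := by
    simp [hLM, List.sum_flatten, List.map_ofFn, Function.comp_def, List.sum_ofFn,
      List.sum_replicate, Finset.mul_sum]
  have hx0 : (0:ℝ) ≤ ∑ ν, x ν := Finset.sum_nonneg fun ν _ => (hx ν).1
  have hx1 : (∑ ν, x ν) ≤ (m : ℝ) := by
    calc (∑ ν, x ν) ≤ ∑ _ν : Fin m, (1:ℝ) := Finset.sum_le_sum fun ν _ => (hx ν).2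
      _ = m := by simp
  have hc0 : 0 ≤ c := by
    rcases Nat.eq_zero_or_pos m with rfl | hm
    · simp [hc]
    · exact div_nonneg hx0 (by positivity)
  have hc1 : c ≤ 1 := by
    rcases Nat.eq_zero_or_pos m with rfl | hm
    · simp [hc]
    · rw [hc, div_le_one (by exact_mod_cast hm)]
      exact hx1
  have hsumLM : LM.sum = ((m * n : ℕ) : ℝ) * c := by
    rcases Nat.eq_zero_or_pos m with rfl | hm
    · simp [hsum0]
    · have hm' : (m : ℝ) ≠ 0 := by positivity
      rw [hsum0, hc]
      push_cast
      field_simp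
  have hcvx : ∀ k, k + 2 ≤ m * n → 0 ≤ g k - 2*g (k+1) + g (k+2) := by
    intro k hk
    have hN : 0 < m * n := by omega
    have hNR : (0:ℝ) < (m : ℝ) * (n : ℝ) := by
      have : (0:ℝ) < ((m*n : ℕ) : ℝ) := by exact_mod_cast hN
      push_cast at this
      linarith
    have hka : ((k:ℝ)) / ((m:ℝ)*(n:ℝ)) ∈ Set.Icc (0:ℝ) 1 := by
      constructor
      · positivity
      · rw [div_le_one hNR]
        have : ((k:ℝ)) ≤ ((m*n : ℕ):ℝ) := by exact_mod_cast (by omega : k ≤ m*n)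
        push_cast at this
        linarith
    have hkb : ((k:ℝ)+2) / ((m:ℝ)*(n:ℝ)) ∈ Set.Icc (0:ℝ) 1 := by
      constructor
      · positivity
      · rw [div_le_one hNR]
        have : ((k:ℝ)+2) ≤ ((m*n : ℕ):ℝ) := by exact_mod_cast (by omega : k + 2 ≤ m*n)
        push_cast at this
        linarith
    have hmid := hf.2 hka hkb (by norm_num : (0:ℝ) ≤ 1/2) (by norm_num : (0:ℝ) ≤ 1/2) (by norm_num)
    have e1 : (1/2 : ℝ) • ((k:ℝ) / ((m:ℝ)*(n:ℝ))) + (1/2 : ℝ) • (((k:ℝ)+2) / ((m:ℝ)*(n:ℝ)))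
        = ((k:ℝ)+1) / ((m:ℝ)*(n:ℝ)) := by
      field_simp
      ring
    rw [e1] at hmid
    simp only [smul_eq_mul] at hmid
    have e2 : g k = f ((k:ℝ) / ((m:ℝ)*(n:ℝ))) := rfl
    have e3 : g (k+1) = f (((k:ℝ)+1) / ((m:ℝ)*(n:ℝ))) := by
      rw [hg]; push_cast; ring_nf
    have e4 : g (k+2) = f (((k:ℝ)+2) / ((m:ℝ)*(n:ℝ))) := by
      rw [hg]; push_cast; ring_nf
    rw [e2, e3, e4]
    linarith
  have hrh := robinhood (m*n) LM g c hlenLM hmemLM hc0 hc1 hsumLM hcvx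
  have hLHS := multi n m x g
  have hRHS : G1 (List.replicate (m*n) c) g = bernOp (m * n) f c := by
    rw [← bsum_eq_G1]
    unfold bsum bernOp
    apply Finset.sum_congr rfl
    intro k _
    rw [hg]
    push_cast
    ring_nf
  calc ∑ i : Fin m → Fin (n+1),
      (∏ ν : Fin m, bern n (i ν) (x ν)) * f (((∑ ν : Fin m, (i ν : ℕ) : ℕ) : ℝ) / (m * n))
      = G1 LM g := hLHS
    _ ≤ G1 (List.replicate (m*n) c) g := hrh
    _ = bernOp (m * n) f c := hRHS
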